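/- Let (M_n) and (m_n) be real sequences with M_n subadditive (M_{n+k} ≤ M_n + M_k), m_n superadditive (m_{n+k} ≥ m_n + m_k), m_n ≤ M_n, and M_n − m_n ≤ C for a constant C independent of n. Then lim M_n/n = inf_n M_n/n and lim m_n/n = sup_n m_n/n exist and are equal to a common value ℓ, and |M_n − nℓ| ≤ C and |m_n − nℓ| ≤ C for all n. -/

import Mathlib

open Filter Topology

/-- If `(M_n)` is subadditive, `(m_n)` is superadditive, `m_n ≤ M_n`, and `M_n − m_n ≤ C`
for all `n ≥ 1`, then `M_n/n → inf_n M_n/n`, `m_n/n → sup_n m_n/n`, both limits equal a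
common value `ℓ`, and `|M_n − nℓ| ≤ C`, `|m_n − nℓ| ≤ C` for all `n ≥ 1`. -/
theorem subadd_superadd_common_limit
    (M m : ℕ → ℝ) (C : ℝ) (hC : 0 ≤ C)
    (hsub : ∀ n k : ℕ, 1 ≤ n → 1 ≤ k → M (n + k) ≤ M n + M k)
    (hsup : ∀ n k : ℕ, 1 ≤ n → 1 ≤ k → m n + m k ≤ m (n + k))
    (hle : ∀ n : ℕ, 1 ≤ n → m n ≤ M n)
    (hgap : ∀ n : ℕ, 1 ≤ n → M n - m n ≤ C) :
    ∃ ℓ : ℝ,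
      Tendsto (fun n : ℕ => M n / n) atTop (𝓝 ℓ) ∧
      Tendsto (fun n : ℕ => m n / n) atTop (𝓝 ℓ) ∧
      ℓ = ⨅ n : {n : ℕ // 1 ≤ n}, M n / n ∧
      ℓ = ⨆ n : {n : ℕ // 1 ≤ n}, m n / n ∧
      (∀ n : ℕ, 1 ≤ n → |M n - n * ℓ| ≤ C) ∧
      (∀ n : ℕ, 1 ≤ n → |m n - n * ℓ| ≤ C) := by
  haveI : Nonempty {n : ℕ // 1 ≤ n} := ⟨⟨1, le_refl 1⟩⟩
  -- iterated bounds
  have hMpow : ∀ n : ℕ, 1 ≤ n → ∀ k : ℕ, 1 ≤ k → M (k * n) ≤ (k : ℝ) * M n := by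
    intro n hn k hk
    induction k with
    | zero => omega
    | succ k ih =>
      rcases Nat.lt_or_ge k 1 with h | h
      · have : k = 0 := by omega
        subst this; simp
      · have hkn : 1 ≤ k * n := Nat.one_le_iff_ne_zero.mpr (by positivity)
        have h1 := hsub (k * n) n hkn hn
        have h2 := ih h
        have : (k + 1) * n = k * n + n := by ring
        rw [this]
        push_cast
        linarith
  have hmpow : ∀ n : ℕ, 1 ≤ n → ∀ k : ℕ, 1 ≤ k → (k : ℝ) * m n ≤ m (k * n) := by
    intro n hn k hk
    induction k with
    | zero => omega
    | succ k ih =>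
      rcases Nat.lt_or_ge k 1 with h | h
      · have : k = 0 := by omega
        subst this; simp
      · have hkn : 1 ≤ k * n := Nat.one_le_iff_ne_zero.mpr (by positivity)
        have h1 := hsup (k * n) n hkn hn
        have h2 := ih h
        have : (k + 1) * n = k * n + n := by ring
        rw [this]
        push_cast
        linarith
  -- cross inequality : m j / j ≤ M n / n
  have cross : ∀ j n : ℕ, 1 ≤ j → 1 ≤ n → m j / j ≤ M n / n := by
    intro j n hj hn
    have h1 : (n : ℝ) * m j ≤ m (n * j) := hmpow j hj n hn
    have h2 : m (n * j) ≤ M (n * j) :=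
      hle _ (Nat.one_le_iff_ne_zero.mpr (by positivity))
    have h3 : M (n * j) ≤ (j : ℝ) * M n := by
      rw [show n * j = j * n by ring]; exact hMpow n hn j hj
    have hjpos : (0 : ℝ) < j := by exact_mod_cast hj
    have hnpos : (0 : ℝ) < n := by exact_mod_cast hn
    rw [div_le_div_iff₀ hjpos hnpos]
    nlinarith
  set ℓ : ℝ := ⨅ n : {n : ℕ // 1 ≤ n}, M n / n with hℓ
  set ℓ' : ℝ := ⨆ n : {n : ℕ // 1 ≤ n}, m n / n with hℓ'
  have hbdd : BddBelow (Set.range fun n : {n : ℕ // 1 ≤ n} => M (n : ℕ) / (n : ℕ)) := by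
    refine ⟨m 1 / (1 : ℕ), ?_⟩
    rintro x ⟨⟨n, hn⟩, rfl⟩
    exact cross 1 n le_rfl hn
  have hbdd' : BddAbove (Set.range fun n : {n : ℕ // 1 ≤ n} => m (n : ℕ) / (n : ℕ)) := by
    refine ⟨M 1 / (1 : ℕ), ?_⟩
    rintro x ⟨⟨n, hn⟩, rfl⟩
    exact cross n 1 hn le_rfl
  have hℓle : ∀ n : ℕ, 1 ≤ n → ℓ ≤ M n / n := fun n hn => ciInf_le hbdd ⟨n, hn⟩
  have hℓ'ge : ∀ n : ℕ, 1 ≤ n → m n / n ≤ ℓ' := fun n hn => le_ciSup hbdd' ⟨n, hn⟩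
  have hℓ'ℓ : ℓ' ≤ ℓ := by
    apply ciSup_le
    rintro ⟨j, hj⟩
    apply le_ciInf
    rintro ⟨n, hn⟩
    exact cross j n hj hn
  have hgapn : ∀ n : ℕ, 1 ≤ n → M n / n ≤ m n / n + C / n := by
    intro n hn
    have hnpos : (0 : ℝ) < n := by exact_mod_cast hn
    have := hgap n hn
    rw [← add_div, div_le_div_iff₀ hnpos hnpos]
    nlinarith
  have hCtend : Tendsto (fun n : ℕ => C / (n : ℝ)) atTop (𝓝 0) :=
    tendsto_const_div_atTop_nhds_zero_nat C
  have hℓℓ' : ℓ ≤ ℓ' := by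
    have htend : Tendsto (fun n : ℕ => ℓ' + C / n) atTop (𝓝 ℓ') := by
      simpa using tendsto_const_nhds.add hCtend
    refine ge_of_tendsto htend ?_
    filter_upwards [eventually_ge_atTop 1] with n hn
    calc ℓ ≤ M n / n := hℓle n hn
      _ ≤ m n / n + C / n := hgapn n hn
      _ ≤ ℓ' + C / n := by linarith [hℓ'ge n hn]
  have heq : ℓ = ℓ' := le_antisymm hℓℓ' hℓ'ℓ
  refine ⟨ℓ, ?_, ?_, rfl, heq, ?_, ?_⟩
  · -- M n / n → ℓ : squeeze ℓ ≤ M n/n ≤ ℓ + C/n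
    refine tendsto_of_tendsto_of_tendsto_of_le_of_le'
      (tendsto_const_nhds : Tendsto (fun _ : ℕ => ℓ) atTop (𝓝 ℓ))
      (by simpa using (tendsto_const_nhds.add hCtend :
        Tendsto (fun n : ℕ => ℓ + C / n) atTop (𝓝 (ℓ + 0)))) ?_ ?_
    · filter_upwards [eventually_ge_atTop 1] with n hn
      exact hℓle n hn
    · filter_upwards [eventually_ge_atTop 1] with n hn
      calc M n / n ≤ m n / n + C / n := hgapn n hn
        _ ≤ ℓ + C / n := by rw [heq]; linarith [hℓ'ge n hn]
  · -- m n / n → ℓ : squeeze ℓ - C/n ≤ m n/n ≤ ℓ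
    refine tendsto_of_tendsto_of_tendsto_of_le_of_le'
      (by simpa using (tendsto_const_nhds.sub hCtend :
        Tendsto (fun n : ℕ => ℓ - C / n) atTop (𝓝 (ℓ - 0))))
      (tendsto_const_nhds : Tendsto (fun _ : ℕ => ℓ) atTop (𝓝 ℓ)) ?_ ?_
    · filter_upwards [eventually_ge_atTop 1] with n hn
      have := hgapn n hn
      have := hℓle n hn
      linarith
    · filter_upwards [eventually_ge_atTop 1] with n hn
      rw [heq]; exact hℓ'ge n hn
  · intro n hn
    have hnpos : (0 : ℝ) < n := by exact_mod_cast hn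
    have h1 : ℓ ≤ M n / n := hℓle n hn
    have h2 : m n / n ≤ ℓ := by rw [heq]; exact hℓ'ge n hn
    have h1' : (n : ℝ) * ℓ ≤ M n := by
      rw [le_div_iff₀ hnpos] at h1; linarith
    have h2' : m n ≤ (n : ℝ) * ℓ := by
      rw [div_le_iff₀ hnpos] at h2; linarith
    rw [abs_of_nonneg (by linarith)]
    linarith [hgap n hn]
  · intro n hn
    have hnpos : (0 : ℝ) < n := by exact_mod_cast hn
    have h1 : ℓ ≤ M n / n := hℓle n hn
    have h2 : m n / n ≤ ℓ := by rw [heq]; exact hℓ'ge n hn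
    have h1' : (n : ℝ) * ℓ ≤ M n := by
      rw [le_div_iff₀ hnpos] at h1; linarith
    have h2' : m n ≤ (n : ℝ) * ℓ := by
      rw [div_le_iff₀ hnpos] at h2; linarith
    rw [abs_of_nonpos (by linarith)]
    linarith [hgap n hn]
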